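/- There exists a constant c₀ > 0, depending only on d, such that for every integer L ≥ 1, every z ∈ ℤ^d and every starting point x ∈ ℤ^d, with B = z + {0,1,…,L−1}^d one has E_x[ exp( (c₀/L²) · #( {X_n : n ≥ 0} ∩ B ) ) ] ≤ 2, i.e. the exponential moment of c₀/L² times the number of sites of the box B visited by the walk is at most 2, uniformly in the box and the starting point. (Lemma 1.1, inequality (1.5).) -/

import Mathlib

open MeasureTheory ProbabilityTheory ENNReal

/-- The box `z + {0,…,L-1}^d` in `ℤ^d`. -/
def latticeBox (d : ℕ) (z : Fin d → ℤ) (L : ℕ) : Set (Fin d → ℤ) :=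
  {x | ∀ i, z i ≤ x i ∧ x i < z i + L}

/-- The distribution of a single step of the simple random walk on `ℤ^d`:
the uniform measure on the `2d` unit vectors `±eᵢ`. -/
noncomputable def srwStep (d : ℕ) : Measure (Fin d → ℤ) :=
  (2 * d : ℝ≥0∞)⁻¹ • ∑ i : Fin d,
    (Measure.dirac (Pi.single i 1) + Measure.dirac (-Pi.single i 1))

section AnalysisLemmas


lemma inv_sqrt_le_of_sq (x p : ℝ) (h1 : 0 < 1 + x) (hp : 0 < p) (key : 1 ≤ p^2 * (1+x)) :
    (Real.sqrt (1+x))⁻¹ ≤ p := by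
  have hs : 0 < Real.sqrt (1+x) := Real.sqrt_pos.2 h1
  have hsq : Real.sqrt (1+x) ^ 2 = 1 + x := Real.sq_sqrt h1.le
  have h2 : (p*Real.sqrt (1+x)-1)*(p*Real.sqrt (1+x)+1) = p^2*(Real.sqrt (1+x)^2) - 1 := by
    ring
  rw [hsq] at h2
  have h4 : (0:ℝ) < p*Real.sqrt (1+x)+1 := by positivity
  have hps : 1 ≤ p * Real.sqrt (1+x) := by
    rcases le_or_gt 1 (p * Real.sqrt (1+x)) with hle | hlt
    · exact hle
    · exfalso
      have : (p*Real.sqrt (1+x)-1)*(p*Real.sqrt (1+x)+1) < 0 :=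
        mul_neg_of_neg_of_pos (by linarith) h4
      rw [h2] at this; linarith
  rw [inv_eq_one_div, div_le_iff₀ hs]
  linarith

lemma inv_sqrt_le_poly (x : ℝ) (h : |x| ≤ 1/2) :
    (Real.sqrt (1+x))⁻¹ ≤ 1 - x/2 + (3/8)*x^2 - (5/16)*x^3 + x^4 := by
  have hx1 : -(1/2) ≤ x := (abs_le.1 h).1
  have hx2 : x ≤ 1/2 := (abs_le.1 h).2
  have h1 : (0:ℝ) < 1 + x := by linarith
  have habs3 : |x|^3 ≤ (1/2)^3 := pow_le_pow_left₀ (abs_nonneg x) h 3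
  have habs5 : |x|^5 ≤ (1/2)^5 := pow_le_pow_left₀ (abs_nonneg x) h 5
  have hx3u : x^3 ≤ 1/8 := by
    calc x^3 ≤ |x^3| := le_abs_self _
    _ = |x|^3 := abs_pow x 3
    _ ≤ 1/8 := by norm_num at habs3 ⊢; linarith
  have hx3l : -(1/8) ≤ x^3 := by
    have := neg_abs_le (x^3)
    rw [abs_pow] at this
    norm_num at habs3; linarith
  have hx5l : -(1/32) ≤ x^5 := by
    have := neg_abs_le (x^5)
    rw [abs_pow] at this
    norm_num at habs5; linarith
  have hx2n : 0 ≤ x^2 := sq_nonneg x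
  have hx4n : 0 ≤ x^4 := by positivity
  have hppos : 0 < 1 - x/2 + (3/8)*x^2 - (5/16)*x^3 + x^4 := by linarith
  have hx2q : x^2 ≤ 1/4 := by nlinarith
  have hr : 0 ≤ 93/64 + (39/32)*x - (99/256)*x^2 + (57/256)*x^3 + (3/8)*x^4 + x^5 := by
    linarith
  have key : 1 ≤ (1 - x/2 + (3/8)*x^2 - (5/16)*x^3 + x^4)^2 * (1+x) := by
    have heq : (1 - x/2 + (3/8)*x^2 - (5/16)*x^3 + x^4)^2 * (1+x) - 1
        = x^4 * (93/64 + (39/32)*x - (99/256)*x^2 + (57/256)*x^3 + (3/8)*x^4 + x^5) := by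
      ring
    have := mul_nonneg hx4n hr
    linarith
  exact inv_sqrt_le_of_sq x _ h1 hppos key
lemma bracket_poly (D A T W4 : ℝ) (hD : 3 ≤ D) (hA : 2*D+40 ≤ A) (hT : A ≤ T)
    (hW4 : 0 ≤ W4) (hW4' : W4 ≤ (T-A)^2) :
    (3-D)*T^3 + (3*D/4 - 2*A - 15/2)*T^2 + ((15/2)*A - (5*D/8) + 48)*T
      + 2*D - 48*A + 32*W4 ≤ 0 := by
  have hT46 : 46 ≤ T := by linarith
  have hT0 : 0 < T := by linarith
  nlinarith [mul_nonneg (mul_nonneg (by linarith : (0:ℝ) ≤ D-3) hT0.le) (mul_nonneg hT0.le hT0.le),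
    mul_nonneg (by linarith : (0:ℝ) ≤ T-A) hT0.le,
    mul_nonneg (mul_nonneg (by linarith : (0:ℝ) ≤ T-A) hT0.le) hT0.le,
    mul_nonneg (by linarith : (0:ℝ) ≤ A) (by linarith : (0:ℝ) ≤ T-A),
    sq_nonneg (T-A), mul_pos hT0 hT0]
lemma pair_bound (t w : ℝ) (h : 2*(1+2*|w|) ≤ t) :
    (Real.sqrt (t+(1+2*w)))⁻¹ + (Real.sqrt (t+(1-2*w)))⁻¹ ≤
      (Real.sqrt t)⁻¹ * (2 - 1/t + (3/4 + 3*w^2)/t^2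
        - ((5/8) + (15/2)*w^2)/t^3 + (2 + 48*w^2 + 32*w^4)/t^4) := by
  have hw : 0 ≤ |w| := abs_nonneg w
  have ht : 0 < t := by linarith
  have habs1 : |1+2*w| ≤ 1+2*|w| := by
    calc |1+2*w| ≤ |(1:ℝ)| + |2*w| := abs_add_le _ _
    _ = 1 + 2*|w| := by rw [abs_one, abs_mul]; norm_num
  have habs2 : |1-2*w| ≤ 1+2*|w| := by
    calc |1-2*w| ≤ |(1:ℝ)| + |2*w| := abs_sub _ _
    _ = 1 + 2*|w| := by rw [abs_one, abs_mul]; norm_num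
  set x : ℝ := (1+2*w)/t with hxd
  set y : ℝ := (1-2*w)/t with hyd
  have hx : |x| ≤ 1/2 := by
    rw [hxd, abs_div, abs_of_pos ht, div_le_iff₀ ht]; linarith
  have hy : |y| ≤ 1/2 := by
    rw [hyd, abs_div, abs_of_pos ht, div_le_iff₀ ht]; linarith
  have hid1 : t+(1+2*w) = t*(1+x) := by rw [hxd]; field_simp
  have hid2 : t+(1-2*w) = t*(1+y) := by rw [hyd]; field_simp
  have hs1 : (Real.sqrt (t+(1+2*w)))⁻¹ = (Real.sqrt t)⁻¹ * (Real.sqrt (1+x))⁻¹ := by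
    rw [hid1, Real.sqrt_mul ht.le, mul_inv]
  have hs2 : (Real.sqrt (t+(1-2*w)))⁻¹ = (Real.sqrt t)⁻¹ * (Real.sqrt (1+y))⁻¹ := by
    rw [hid2, Real.sqrt_mul ht.le, mul_inv]
  have hst : 0 ≤ (Real.sqrt t)⁻¹ := by positivity
  have hbx := inv_sqrt_le_poly x hx
  have hby := inv_sqrt_le_poly y hy
  have hsum : (Real.sqrt (1+x))⁻¹ + (Real.sqrt (1+y))⁻¹
      ≤ 2 - 1/t + (3/4 + 3*w^2)/t^2 - ((5/8) + (15/2)*w^2)/t^3 + (2 + 48*w^2 + 32*w^4)/t^4 := by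
    have heq : (1 - x/2 + (3/8)*x^2 - (5/16)*x^3 + x^4) + (1 - y/2 + (3/8)*y^2 - (5/16)*y^3 + y^4)
        = 2 - 1/t + (3/4 + 3*w^2)/t^2 - ((5/8) + (15/2)*w^2)/t^3 + (2 + 48*w^2 + 32*w^4)/t^4 := by
      rw [hxd, hyd]; field_simp; ring
    linarith
  calc (Real.sqrt (t+(1+2*w)))⁻¹ + (Real.sqrt (t+(1-2*w)))⁻¹
      = (Real.sqrt t)⁻¹ * ((Real.sqrt (1+x))⁻¹ + (Real.sqrt (1+y))⁻¹) := by
        rw [hs1, hs2]; ring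
    _ ≤ (Real.sqrt t)⁻¹ * (2 - 1/t + (3/4 + 3*w^2)/t^2
        - ((5/8) + (15/2)*w^2)/t^3 + (2 + 48*w^2 + 32*w^4)/t^4) := by
        exact mul_le_mul_of_nonneg_left hsum hst
lemma sum_bound (d : ℕ) (hd : 3 ≤ d) (a : ℝ) (ha : 2*(d:ℝ)+40 ≤ a) (w : Fin d → ℝ)
    (t : ℝ) (ht : t = a + ∑ i, (w i)^2) :
    ∑ i, ((Real.sqrt (t+(1+2*w i)))⁻¹ + (Real.sqrt (t+(1-2*w i)))⁻¹)
      ≤ 2*d*(Real.sqrt t)⁻¹ - a * ((Real.sqrt t)⁻¹ / t^2) := by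
  have hd' : (3:ℝ) ≤ (d:ℝ) := by exact_mod_cast hd
  have hW2 : (0:ℝ) ≤ ∑ i, (w i)^2 := Finset.sum_nonneg fun i _ => sq_nonneg _
  have hta : a ≤ t := by rw [ht]; linarith
  have ha46 : (46:ℝ) ≤ a := by linarith
  have ht0 : (0:ℝ) < t := by linarith
  -- per-coordinate hypothesis
  have hcond : ∀ i, 2*(1+2*|w i|) ≤ t := by
    intro i
    have hsingle : (w i)^2 ≤ ∑ j, (w j)^2 :=
      Finset.single_le_sum (fun j _ => sq_nonneg (w j)) (Finset.mem_univ i)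
    have habs : (|w i| - 2)^2 ≥ 0 := sq_nonneg _
    have : |w i|^2 = (w i)^2 := sq_abs _
    nlinarith [abs_nonneg (w i)]
  have hstep := fun i => pair_bound t (w i) (hcond i)
  have hsum := Finset.sum_le_sum (fun i (_ : i ∈ Finset.univ) => hstep i)
  set S : ℝ := (Real.sqrt t)⁻¹ with hS
  have hS0 : 0 ≤ S := by rw [hS]; positivity
  set W2 : ℝ := ∑ i, (w i)^2 with hW2d
  set W4 : ℝ := ∑ i, (w i)^4 with hW4d
  have hW4nn : 0 ≤ W4 := Finset.sum_nonneg fun i _ => by positivity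
  have hW4sq : W4 ≤ W2^2 := by
    rw [hW4d, hW2d]
    have : ∀ i ∈ Finset.univ, (w i)^4 = ((w i)^2)^2 := fun i _ => by ring
    rw [Finset.sum_congr rfl this]
    exact Finset.sum_sq_le_sq_sum_of_nonneg (fun i _ => sq_nonneg (w i))
  -- closed form of the RHS sum
  have hclosed : ∑ i, ((Real.sqrt t)⁻¹ * (2 - 1/t + (3/4 + 3*(w i)^2)/t^2
        - ((5/8) + (15/2)*(w i)^2)/t^3 + (2 + 48*(w i)^2 + 32*(w i)^4)/t^4))
      = S * ((d:ℝ)*(2 - 1/t + (3/4)/t^2 - (5/8)/t^3 + 2/t^4)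
          + W2 * (3/t^2 - (15/2)/t^3 + 48/t^4) + W4 * (32/t^4)) := by
    have hterm : ∀ i ∈ Finset.univ, (Real.sqrt t)⁻¹ * (2 - 1/t + (3/4 + 3*(w i)^2)/t^2
        - ((5/8) + (15/2)*(w i)^2)/t^3 + (2 + 48*(w i)^2 + 32*(w i)^4)/t^4)
        = S * (2 - 1/t + (3/4)/t^2 - (5/8)/t^3 + 2/t^4)
          + (S * (3/t^2 - (15/2)/t^3 + 48/t^4)) * (w i)^2
          + (S * (32/t^4)) * (w i)^4 := by
      intro i _
      rw [hS]
      field_simp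
      ring
    rw [Finset.sum_congr rfl hterm]
    rw [Finset.sum_add_distrib, Finset.sum_add_distrib, Finset.sum_const,
      ← Finset.mul_sum, ← Finset.mul_sum, Finset.card_univ, Fintype.card_fin]
    rw [hW2d, hW4d]
    ring
  -- bracket inequality
  have hbracket : (d:ℝ)*(2 - 1/t + (3/4)/t^2 - (5/8)/t^3 + 2/t^4)
          + W2 * (3/t^2 - (15/2)/t^3 + 48/t^4) + W4 * (32/t^4)
      ≤ 2*(d:ℝ) - a/t^2 := by
    have hW2t : W2 = t - a := by rw [hW2d, ht]; ring
    have hpoly := bracket_poly (d:ℝ) a t W4 hd' ha hta hW4nn (by rw [← hW2t]; exact hW4sq)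
    have heq : ((d:ℝ)*(2 - 1/t + (3/4)/t^2 - (5/8)/t^3 + 2/t^4)
          + W2 * (3/t^2 - (15/2)/t^3 + 48/t^4) + W4 * (32/t^4)) - (2*(d:ℝ) - a/t^2)
        = ((3-(d:ℝ))*t^3 + (3*(d:ℝ)/4 - 2*a - 15/2)*t^2 + ((15/2)*a - (5*(d:ℝ)/8) + 48)*t
      + 2*(d:ℝ) - 48*a + 32*W4) / t^4 := by
      rw [hW2t]
      field_simp
      ring
    have ht4 : (0:ℝ) < t^4 := by positivity
    have := div_nonpos_of_nonpos_of_nonneg hpoly ht4.le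
    linarith
  calc ∑ i, ((Real.sqrt (t+(1+2*w i)))⁻¹ + (Real.sqrt (t+(1-2*w i)))⁻¹)
      ≤ ∑ i, ((Real.sqrt t)⁻¹ * (2 - 1/t + (3/4 + 3*(w i)^2)/t^2
        - ((5/8) + (15/2)*(w i)^2)/t^3 + (2 + 48*(w i)^2 + 32*(w i)^4)/t^4)) := hsum
    _ = S * ((d:ℝ)*(2 - 1/t + (3/4)/t^2 - (5/8)/t^3 + 2/t^4)
          + W2 * (3/t^2 - (15/2)/t^3 + 48/t^4) + W4 * (32/t^4)) := hclosed
    _ ≤ S * (2*(d:ℝ) - a/t^2) := mul_le_mul_of_nonneg_left hbracket hS0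
    _ = 2*d*S - a * (S / t^2) := by ring
noncomputable def boxA (d L : ℕ) : ℝ := (2*(d:ℝ)+40)*(L:ℝ)^2

noncomputable def boxT (d : ℕ) (z : Fin d → ℤ) (a : ℝ) (y : Fin d → ℤ) : ℝ :=
  a + ∑ i, ((y i - z i : ℤ):ℝ)^2

noncomputable def boxF (d : ℕ) (z : Fin d → ℤ) (a : ℝ) (y : Fin d → ℤ) : ℝ :=
  Real.sqrt a * (Real.sqrt (boxT d z a y))⁻¹

noncomputable def boxH (d : ℕ) (z : Fin d → ℤ) (a : ℝ) (y : Fin d → ℤ) : ℝ :=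
  1 + boxF d z a y

noncomputable def srwc₁ (d : ℕ) : ℝ :=
  ((2*(d:ℝ)+40) * Real.sqrt (2*(d:ℝ)+40)) / (((3*(d:ℝ)+40)^2) * Real.sqrt (3*(d:ℝ)+40))

noncomputable def srwc₀ (d : ℕ) : ℝ := srwc₁ d / (4*(d:ℝ))

lemma srwc₁_pos (d : ℕ) : 0 < srwc₁ d := by
  unfold srwc₁
  have h1 : (0:ℝ) < 2*(d:ℝ)+40 := by positivity
  have h2 : (0:ℝ) < 3*(d:ℝ)+40 := by positivity
  positivity

lemma srwc₀_pos (d : ℕ) (hd : 3 ≤ d) : 0 < srwc₀ d := by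
  unfold srwc₀
  have := srwc₁_pos d
  have : (0:ℝ) < (d:ℝ) := by exact_mod_cast (by omega : 0 < d)
  positivity

section analysis

variable (d : ℕ) (z : Fin d → ℤ) (a : ℝ)

lemma boxT_ge (y : Fin d → ℤ) : a ≤ boxT d z a y := by
  unfold boxT
  have : (0:ℝ) ≤ ∑ i, ((y i - z i : ℤ):ℝ)^2 := Finset.sum_nonneg fun i _ => sq_nonneg _
  linarith

lemma boxT_pos (ha : 0 < a) (y : Fin d → ℤ) : 0 < boxT d z a y :=
  lt_of_lt_of_le ha (boxT_ge d z a y)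

lemma boxF_nonneg (ha : 0 < a) (y : Fin d → ℤ) : 0 ≤ boxF d z a y := by
  unfold boxF; positivity

lemma boxF_le_one (ha : 0 < a) (y : Fin d → ℤ) : boxF d z a y ≤ 1 := by
  unfold boxF
  have h1 : Real.sqrt a ≤ Real.sqrt (boxT d z a y) := Real.sqrt_le_sqrt (boxT_ge d z a y)
  have h2 : 0 < Real.sqrt (boxT d z a y) := Real.sqrt_pos.2 (boxT_pos d z a ha y)
  rw [← div_eq_mul_inv, div_le_one h2]
  exact h1

lemma boxH_ge_one (ha : 0 < a) (y : Fin d → ℤ) : 1 ≤ boxH d z a y := by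
  unfold boxH; linarith [boxF_nonneg d z a ha y]

lemma boxH_le_two (ha : 0 < a) (y : Fin d → ℤ) : boxH d z a y ≤ 2 := by
  unfold boxH; linarith [boxF_le_one d z a ha y]

lemma boxT_shift (y : Fin d → ℤ) (i : Fin d) (ε : ℤ) (hε : ε = 1 ∨ ε = -1) :
    boxT d z a (y + fun j => if j = i then ε else 0)
      = boxT d z a y + (1 + 2*(ε:ℝ)*((y i - z i : ℤ):ℝ)) := by
  unfold boxT
  have hterm : ∀ j ∈ Finset.univ, (((y + fun j => if j = i then ε else 0) j - z j : ℤ):ℝ)^2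
      = ((y j - z j : ℤ):ℝ)^2 + (if j = i then 1 + 2*(ε:ℝ)*((y i - z i : ℤ):ℝ) else 0) := by
    intro j _
    by_cases hj : j = i
    · subst hj
      simp only [Pi.add_apply, if_pos rfl]
      push_cast
      rcases hε with h | h <;> (subst h; push_cast; ring)
    · simp only [Pi.add_apply, if_neg hj]
      push_cast
      ring
  rw [Finset.sum_congr rfl hterm, Finset.sum_add_distrib, Finset.sum_ite_eq' Finset.univ i]
  simp only [Finset.mem_univ, if_pos]
  ring

lemma box_super (hd : 3 ≤ d) (ha : 2*(d:ℝ)+40 ≤ a) (y : Fin d → ℤ) :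
    ∑ i, (boxF d z a (y + fun j => if j = i then 1 else 0)
          + boxF d z a (y - fun j => if j = i then 1 else 0))
      ≤ 2*d * boxF d z a y
        - Real.sqrt a * a * ((Real.sqrt (boxT d z a y))⁻¹ / (boxT d z a y)^2) := by
  set t : ℝ := boxT d z a y with htd
  have ht : t = a + ∑ i, (((y i - z i : ℤ):ℝ))^2 := rfl
  have hsqa : 0 ≤ Real.sqrt a := Real.sqrt_nonneg a
  have hshift : ∀ i : Fin d,
      boxF d z a (y + fun j => if j = i then 1 else 0)
        + boxF d z a (y - fun j => if j = i then 1 else 0)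
      = Real.sqrt a * ((Real.sqrt (t + (1+2*((y i - z i : ℤ):ℝ))))⁻¹ + (Real.sqrt (t + (1-2*((y i - z i : ℤ):ℝ))))⁻¹) := by
    intro i
    have h1 := boxT_shift d z a y i 1 (Or.inl rfl)
    have h2 := boxT_shift d z a y i (-1) (Or.inr rfl)
    have hsub : y - (fun j => if j = i then (1:ℤ) else 0) = y + fun j => if j = i then (-1:ℤ) else 0 := by
      funext j; by_cases hj : j = i <;> simp [hj, sub_eq_add_neg]
    unfold boxF
    rw [hsub, h1, h2, ← htd]
    push_cast
    ring_nf
  rw [Finset.sum_congr rfl (fun i _ => hshift i), ← Finset.mul_sum]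
  have hsb := sum_bound d hd a ha (fun i => ((y i - z i : ℤ):ℝ)) t ht
  calc Real.sqrt a * (∑ i, ((Real.sqrt (t+(1+2*((y i - z i : ℤ):ℝ))))⁻¹ + (Real.sqrt (t+(1-2*((y i - z i : ℤ):ℝ))))⁻¹))
      ≤ Real.sqrt a * (2*d*(Real.sqrt t)⁻¹ - a * ((Real.sqrt t)⁻¹ / t^2)) :=
        mul_le_mul_of_nonneg_left hsb hsqa
    _ = 2*d * (Real.sqrt a * (Real.sqrt t)⁻¹) - Real.sqrt a * a * ((Real.sqrt t)⁻¹ / t^2) := by ring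
    _ = 2*d * boxF d z a y - Real.sqrt a * a * ((Real.sqrt t)⁻¹ / t^2) := rfl

end analysis

lemma single_eq_ite (d : ℕ) (i : Fin d) : (Pi.single i 1 : Fin d → ℤ) = fun j => if j = i then 1 else 0 := by
  funext j; rw [Pi.single_apply]

lemma box_t_le (d : ℕ) (z : Fin d → ℤ) (L : ℕ) (y : Fin d → ℤ)
    (hy : y ∈ latticeBox d z L) :
    boxT d z (boxA d L) y ≤ (3*(d:ℝ)+40)*(L:ℝ)^2 := by
  unfold boxT boxA
  have hsum : ∑ i, ((y i - z i : ℤ):ℝ)^2 ≤ ∑ _i : Fin d, (L:ℝ)^2 := by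
    apply Finset.sum_le_sum
    intro i _
    have h1 : z i ≤ y i := (hy i).1
    have h2 : y i < z i + L := (hy i).2
    have hw1 : (0:ℝ) ≤ ((y i - z i : ℤ):ℝ) := by
      push_cast
      have h1' : (z i : ℝ) ≤ (y i : ℝ) := by exact_mod_cast h1
      linarith
    have hw2 : ((y i - z i : ℤ):ℝ) ≤ (L:ℝ) := by
      push_cast
      have : (y i : ℝ) < (z i : ℝ) + (L:ℝ) := by exact_mod_cast h2
      linarith
    nlinarith
  rw [Finset.sum_const, Finset.card_univ, Fintype.card_fin, nsmul_eq_mul] at hsum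
  push_cast at hsum ⊢
  nlinarith [hsum]

lemma step_real_core (d : ℕ) (hd : 3 ≤ d) (z : Fin d → ℤ) (L : ℕ) (hL : 1 ≤ L) (y : Fin d → ℤ) :
    ((2*(d:ℝ))⁻¹ * ∑ i, (boxH d z (boxA d L) (y + Pi.single i 1)
          + boxH d z (boxA d L) (y - Pi.single i 1)))
      ≤ boxH d z (boxA d L) y
        - (2*(d:ℝ))⁻¹ * (Real.sqrt (boxA d L) * (boxA d L)
            * ((Real.sqrt (boxT d z (boxA d L) y))⁻¹ / (boxT d z (boxA d L) y)^2)) := by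
  have hdR : (3:ℝ) ≤ (d:ℝ) := by exact_mod_cast hd
  have hLR : (1:ℝ) ≤ (L:ℝ) := by exact_mod_cast hL
  set a : ℝ := boxA d L with had
  have hL2 : (1:ℝ) ≤ (L:ℝ)^2 := by nlinarith
  have haK : 2*(d:ℝ)+40 ≤ a := by
    rw [had]; unfold boxA; nlinarith
  have ha0 : 0 < a := by linarith
  set t : ℝ := boxT d z a y with htd
  have ht0 : 0 < t := boxT_pos d z a ha0 y
  have hsup := box_super d z a hd haK y
  rw [← htd] at hsup
  have hsup' : ∑ i, (boxH d z a (y + Pi.single i 1) + boxH d z a (y - Pi.single i 1))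
      ≤ 2*(d:ℝ)*(boxH d z a y) - Real.sqrt a * a * ((Real.sqrt t)⁻¹ / t^2) := by
    have hconv : ∀ i : Fin d,
        boxH d z a (y + Pi.single i 1) + boxH d z a (y - Pi.single i 1)
        = 2 + (boxF d z a (y + fun j => if j = i then 1 else 0)
             + boxF d z a (y - fun j => if j = i then 1 else 0)) := by
      intro i
      rw [single_eq_ite]
      unfold boxH
      ring
    rw [Finset.sum_congr rfl (fun i _ => hconv i), Finset.sum_add_distrib, Finset.sum_const,
      Finset.card_univ, Fintype.card_fin, nsmul_eq_mul]
    unfold boxH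
    push_cast
    linarith
  have hd0 : (0:ℝ) < 2*(d:ℝ) := by linarith
  have h1 : (2*(d:ℝ))⁻¹ * ∑ i, (boxH d z a (y + Pi.single i 1) + boxH d z a (y - Pi.single i 1))
      ≤ (2*(d:ℝ))⁻¹ * (2*(d:ℝ)*(boxH d z a y) - Real.sqrt a * a * ((Real.sqrt t)⁻¹ / t^2)) :=
    mul_le_mul_of_nonneg_left hsup' (by positivity)
  have h2 : (2*(d:ℝ))⁻¹ * (2*(d:ℝ)*(boxH d z a y) - Real.sqrt a * a * ((Real.sqrt t)⁻¹ / t^2))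
      = boxH d z a y - (2*(d:ℝ))⁻¹ * (Real.sqrt a * a * ((Real.sqrt t)⁻¹ / t^2)) := by
    field_simp
  rw [h2] at h1
  exact h1

lemma step_real_all (d : ℕ) (hd : 3 ≤ d) (z : Fin d → ℤ) (L : ℕ) (hL : 1 ≤ L) (y : Fin d → ℤ) :
    ((2*(d:ℝ))⁻¹ * ∑ i, (boxH d z (boxA d L) (y + Pi.single i 1)
          + boxH d z (boxA d L) (y - Pi.single i 1)))
      ≤ boxH d z (boxA d L) y := by
  have h := step_real_core d hd z L hL y
  have hdR : (3:ℝ) ≤ (d:ℝ) := by exact_mod_cast hd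
  have hLR : (1:ℝ) ≤ (L:ℝ) := by exact_mod_cast hL
  have ha0 : 0 < boxA d L := by unfold boxA; nlinarith
  have ht0 : 0 < boxT d z (boxA d L) y := boxT_pos d z _ ha0 y
  have : 0 ≤ (2*(d:ℝ))⁻¹ * (Real.sqrt (boxA d L) * (boxA d L)
            * ((Real.sqrt (boxT d z (boxA d L) y))⁻¹ / (boxT d z (boxA d L) y)^2)) := by positivity
  linarith

lemma step_real_mem (d : ℕ) (hd : 3 ≤ d) (z : Fin d → ℤ) (L : ℕ) (hL : 1 ≤ L) (y : Fin d → ℤ)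
    (hy : y ∈ latticeBox d z L) :
    Real.exp (srwc₀ d / (L:ℝ)^2) *
      ((2*(d:ℝ))⁻¹ * ∑ i, (boxH d z (boxA d L) (y + Pi.single i 1)
          + boxH d z (boxA d L) (y - Pi.single i 1)))
      ≤ boxH d z (boxA d L) y := by
  have hdR : (3:ℝ) ≤ (d:ℝ) := by exact_mod_cast hd
  have hLR : (1:ℝ) ≤ (L:ℝ) := by exact_mod_cast hL
  set a : ℝ := boxA d L with had
  have hL2 : (1:ℝ) ≤ (L:ℝ)^2 := by nlinarith
  have haK : 2*(d:ℝ)+40 ≤ a := by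
    rw [had]; unfold boxA; nlinarith
  have ha0 : 0 < a := by linarith
  set t : ℝ := boxT d z a y with htd
  have ht0 : 0 < t := boxT_pos d z a ha0 y
  have hst0 : 0 < Real.sqrt t := Real.sqrt_pos.2 ht0
  have hP := step_real_core d hd z L hL y
  rw [← had, ← htd] at hP
  have hh1 : 1 ≤ boxH d z a y := boxH_ge_one d z a ha0 y
  have hh2 : boxH d z a y ≤ 2 := boxH_le_two d z a ha0 y
  -- lower bound on the gap
  set T : ℝ := (3*(d:ℝ)+40)*(L:ℝ)^2 with hTd
  have htT : t ≤ T := by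
    have := box_t_le d z L y hy
    rw [← had, ← htd] at this
    exact this
  have hT0 : 0 < T := lt_of_lt_of_le ht0 htT
  have hsT0 : 0 < Real.sqrt T := Real.sqrt_pos.2 hT0
  have hmono : (Real.sqrt T)⁻¹ / T^2 ≤ (Real.sqrt t)⁻¹ / t^2 := by
    rw [div_eq_mul_inv, div_eq_mul_inv, ← mul_inv, ← mul_inv]
    apply inv_anti₀ (by positivity)
    apply mul_le_mul (Real.sqrt_le_sqrt htT) (by nlinarith) (by positivity) (by positivity)
  have hgapT : srwc₁ d / (L:ℝ)^2 = Real.sqrt a * a * ((Real.sqrt T)⁻¹ / T^2) := by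
    have hsa : Real.sqrt a = Real.sqrt (2*(d:ℝ)+40) * (L:ℝ) := by
      rw [had]; unfold boxA
      rw [Real.sqrt_mul (by positivity), Real.sqrt_sq (by positivity)]
    have hsT : Real.sqrt T = Real.sqrt (3*(d:ℝ)+40) * (L:ℝ) := by
      rw [hTd, Real.sqrt_mul (by positivity), Real.sqrt_sq (by positivity)]
    rw [hsa, hsT, hTd, had]
    unfold boxA srwc₁
    have h1 : (0:ℝ) < Real.sqrt (3*(d:ℝ)+40) := Real.sqrt_pos.2 (by positivity)
    have h2 : (0:ℝ) < (L:ℝ) := by linarith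
    have h3 : (0:ℝ) < Real.sqrt (2*(d:ℝ)+40) := Real.sqrt_pos.2 (by positivity)
    field_simp
  have hgap_ge : srwc₁ d / (L:ℝ)^2 ≤ Real.sqrt a * a * ((Real.sqrt t)⁻¹ / t^2) := by
    rw [hgapT]
    apply mul_le_mul_of_nonneg_left hmono (by positivity)
  set lam : ℝ := srwc₀ d / (L:ℝ)^2 with hlam
  have hlam0 : 0 < lam := by
    rw [hlam]; exact div_pos (srwc₀_pos d hd) (by positivity)
  have h2lam : 2*lam ≤ (2*(d:ℝ))⁻¹ * (Real.sqrt a * a * ((Real.sqrt t)⁻¹ / t^2)) := by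
    have heq : 2*lam = (2*(d:ℝ))⁻¹ * (srwc₁ d / (L:ℝ)^2) := by
      rw [hlam]; unfold srwc₀
      have hd0 : (d:ℝ) ≠ 0 := by linarith
      field_simp
      ring
    rw [heq]
    exact mul_le_mul_of_nonneg_left hgap_ge (by positivity)
  have hPB : (2*(d:ℝ))⁻¹ * ∑ i, (boxH d z a (y + Pi.single i 1) + boxH d z a (y - Pi.single i 1))
      ≤ boxH d z a y - 2*lam := by linarith
  have hexp1 : Real.exp lam * (1 - lam) ≤ 1 := by
    have h1 : 1 - lam ≤ Real.exp (-lam) := by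
      have := Real.add_one_le_exp (-lam); linarith
    have h2 : Real.exp lam * (1-lam) ≤ Real.exp lam * Real.exp (-lam) :=
      mul_le_mul_of_nonneg_left h1 (Real.exp_pos lam).le
    rw [← Real.exp_add] at h2
    simpa using h2
  have hstep1 : boxH d z a y - 2*lam ≤ boxH d z a y * (1 - lam) := by nlinarith
  calc Real.exp lam * ((2*(d:ℝ))⁻¹ * ∑ i, (boxH d z a (y + Pi.single i 1) + boxH d z a (y - Pi.single i 1)))
      ≤ Real.exp lam * (boxH d z a y * (1 - lam)) := by
        apply mul_le_mul_of_nonneg_left _ (Real.exp_pos lam).le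
        linarith
    _ = boxH d z a y * (Real.exp lam * (1 - lam)) := by ring
    _ ≤ boxH d z a y * 1 := mul_le_mul_of_nonneg_left hexp1 (by linarith)
    _ = boxH d z a y := mul_one _

end AnalysisLemmas

section ProbabilityLemmas

lemma srwStep_isProbability (d : ℕ) (hd : 3 ≤ d) : IsProbabilityMeasure (srwStep d) := by
  constructor
  unfold srwStep
  simp [Measure.smul_apply, Measure.finset_sum_apply, Measure.dirac_apply]
  rw [← two_mul, ENNReal.inv_mul_cancel]
  · simp; omega
  · exact ENNReal.mul_ne_top (by simp) (ENNReal.natCast_ne_top d)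

lemma srwStep_lintegral (d : ℕ) (f : (Fin d → ℤ) → ℝ≥0∞) (y : Fin d → ℤ) :
    ∫⁻ e, f (y + e) ∂(srwStep d)
      = (2 * d : ℝ≥0∞)⁻¹ * ∑ i : Fin d, (f (y + Pi.single i 1) + f (y - Pi.single i 1)) := by
  unfold srwStep
  rw [lintegral_smul_measure, lintegral_finset_sum_measure]
  congr 1
  apply Finset.sum_congr rfl
  intro i _
  rw [lintegral_add_measure, lintegral_dirac, lintegral_dirac, sub_eq_add_neg]

lemma latticeBox_finite (d : ℕ) (z : Fin d → ℤ) (L : ℕ) : (latticeBox d z L).Finite := by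
  apply Set.Finite.subset (Set.finite_range (fun (u : Fin d → Fin (L+1)) => (fun i => z i + (u i : ℤ))))
  intro y hy
  have h : ∀ i, z i ≤ y i ∧ y i < z i + L := hy
  refine ⟨fun i => ⟨(y i - z i).toNat, ?_⟩, ?_⟩
  · have h1 := (h i).1
    have h2 := (h i).2
    omega
  · funext i
    have h1 := (h i).1
    have h2 := (h i).2
    simp only
    omega

open Classical in
lemma prod_ite_mem_pow {E : Type*} (s : Finset ℕ) (f : ℕ → E) (B : Set E) (r : ℝ≥0∞) :
    ∏ k ∈ s, (if f k ∈ B then r else 1) = r ^ (s.filter (fun k => f k ∈ B)).card := by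
  rw [← Finset.prod_filter_mul_prod_filter_not s (fun k => f k ∈ B)]
  have h1 : ∏ k ∈ s.filter (fun k => f k ∈ B), (if f k ∈ B then r else 1)
      = r ^ (s.filter (fun k => f k ∈ B)).card := by
    rw [Finset.prod_congr rfl (fun k hk => if_pos (Finset.mem_filter.1 hk).2), Finset.prod_const]
  have h2 : ∏ k ∈ s.filter (fun k => ¬ (f k ∈ B)), (if f k ∈ B then r else 1) = 1 :=
    Finset.prod_eq_one (fun k hk => if_neg (Finset.mem_filter.1 hk).2)
  rw [h1, h2, mul_one]

end ProbabilityLemmas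


/-- Lemma 1.1, inequality (1.5): there is a constant `c₀ > 0`, depending only on `d`, such
that for every box `B = z + [0,L)^d` and every starting point `x`, the exponential moment
`E_x[exp((c₀/L²)·|range(X) ∩ B|)]` of the number of sites of `B` visited by the walk is
at most `2`. -/
theorem srw_exp_range_in_box_le_two (d : ℕ) (hd : 3 ≤ d) :
    ∃ c₀ : ℝ, 0 < c₀ ∧
      ∀ (L : ℕ), 1 ≤ L → ∀ (z x : Fin d → ℤ),
      ∀ (Ω : Type) [MeasurableSpace Ω] (P : Measure Ω) [IsProbabilityMeasure P]
        (X : ℕ → Ω → (Fin d → ℤ)) (τ : ℕ → Ω → ℝ),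
        (∀ ω, X 0 ω = x) →
        (∀ n, Measurable (X n)) →
        (∀ n, Measurable (τ n)) →
        (∀ n, P.map (fun ω => (X (n + 1) ω - X n ω, τ n ω))
            = (srwStep d).prod (expMeasure 1)) →
        iIndepFun
          (fun n ω => (X (n + 1) ω - X n ω, τ n ω)) P →
        ∫⁻ ω, ENNReal.ofReal (Real.exp ((c₀ / (L : ℝ) ^ 2) *
            ((Set.range (fun n => X n ω) ∩ latticeBox d z L).ncard : ℝ))) ∂P ≤ 2 := by
  classical
  refine ⟨srwc₀ d, srwc₀_pos d hd, ?_⟩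
  intro L hL z x Ω _ P _ X τ hX0 hX hτ hmap hind
  haveI : IsProbabilityMeasure (expMeasure 1) := isProbabilityMeasure_expMeasure one_pos
  haveI : IsProbabilityMeasure (srwStep d) := srwStep_isProbability d hd
  have hdR : (3:ℝ) ≤ (d:ℝ) := by exact_mod_cast hd
  set a : ℝ := boxA d L with had
  set B : Set (Fin d → ℤ) := latticeBox d z L with hBd
  set lam : ℝ := srwc₀ d / (L:ℝ)^2 with hlamd
  have hLR : (1:ℝ) ≤ (L:ℝ) := by exact_mod_cast hL
  have hlam0 : 0 < lam := div_pos (srwc₀_pos d hd) (by nlinarith)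
  set ρ : (Fin d → ℤ) → ℝ≥0∞ :=
    (fun y => if y ∈ B then ENNReal.ofReal (Real.exp lam) else 1) with hρd
  set H : (Fin d → ℤ) → ℝ≥0∞ := (fun y => ENNReal.ofReal (boxH d z a y)) with hHd
  have ha0 : 0 < a := by
    rw [had]; unfold boxA; nlinarith
  have hH1 : ∀ y, 1 ≤ H y := by
    intro y
    rw [hHd]
    simpa using ENNReal.one_le_ofReal.2 (boxH_ge_one d z a ha0 y)
  have hρ1 : ∀ y, 1 ≤ ρ y := by
    intro y
    rw [hρd]
    simp only
    split_ifs
    · exact ENNReal.one_le_ofReal.2 (Real.one_le_exp hlam0.le)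
    · exact le_refl 1
  -- Key one-step inequality
  have hkey : ∀ y : Fin d → ℤ,
      ρ y * ((2 * d : ℝ≥0∞)⁻¹ * ∑ i : Fin d, (H (y + Pi.single i 1) + H (y - Pi.single i 1)))
        ≤ H y := by
    intro y
    have hd2 : (0:ℝ) < 2*(d:ℝ) := by linarith
    have hinv : (2 * (d:ℝ≥0∞))⁻¹ = ENNReal.ofReal ((2*(d:ℝ))⁻¹) := by
      rw [ENNReal.ofReal_inv_of_pos hd2]
      congr 1
      rw [ENNReal.ofReal_mul (by norm_num : (0:ℝ) ≤ 2)]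
      simp [ENNReal.ofReal_natCast]
    have hsum : ∑ i : Fin d, (H (y + Pi.single i 1) + H (y - Pi.single i 1))
        = ENNReal.ofReal (∑ i : Fin d, (boxH d z a (y + Pi.single i 1)
            + boxH d z a (y - Pi.single i 1))) := by
      rw [ENNReal.ofReal_sum_of_nonneg]
      · apply Finset.sum_congr rfl
        intro i _
        rw [hHd]
        simp only
        rw [ENNReal.ofReal_add]
        · linarith [boxH_ge_one d z a ha0 (y + Pi.single i 1)]
        · linarith [boxH_ge_one d z a ha0 (y - Pi.single i 1)]
      · intro i _
        have h1 := boxH_ge_one d z a ha0 (y + Pi.single i 1)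
        have h2 := boxH_ge_one d z a ha0 (y - Pi.single i 1)
        linarith
    have hsnn : (0:ℝ) ≤ ∑ i : Fin d, (boxH d z a (y + Pi.single i 1)
        + boxH d z a (y - Pi.single i 1)) := by
      apply Finset.sum_nonneg
      intro i _
      have h1 := boxH_ge_one d z a ha0 (y + Pi.single i 1)
      have h2 := boxH_ge_one d z a ha0 (y - Pi.single i 1)
      linarith
    rw [hinv, hsum, ← ENNReal.ofReal_mul (by positivity)]
    rw [hρd, hHd]
    simp only
    by_cases hy : y ∈ B
    · rw [if_pos hy, ← ENNReal.ofReal_mul (Real.exp_nonneg lam)]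
      apply ENNReal.ofReal_le_ofReal
      rw [hlamd]
      exact step_real_mem d hd z L hL y hy
    · rw [if_neg hy, one_mul]
      apply ENNReal.ofReal_le_ofReal
      exact step_real_all d hd z L hL y
  -- increments
  set ξ : ℕ → Ω → (Fin d → ℤ) := (fun n ω => X (n+1) ω - X n ω) with hξd
  have hξm : ∀ n, Measurable (ξ n) := fun n => (hX (n+1)).sub (hX n)
  have hXtel : ∀ n ω, X n ω = x + ∑ k ∈ Finset.range n, ξ k ω := by
    intro n
    induction n with
    | zero => intro ω; simp [hX0 ω]
    | succ n ih =>
      intro ω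
      have : X (n+1) ω = X n ω + ξ n ω := by rw [hξd]; simp
      rw [this, ih ω, Finset.sum_range_succ, add_assoc]
  have hξlaw : ∀ n, P.map (ξ n) = srwStep d := by
    intro n
    have hpm : Measurable (fun ω => (X (n + 1) ω - X n ω, τ n ω)) :=
      ((hX (n+1)).sub (hX n)).prodMk (hτ n)
    have h1 : P.map (ξ n) = (P.map (fun ω => (X (n + 1) ω - X n ω, τ n ω))).map Prod.fst := by
      rw [Measure.map_map measurable_fst hpm]
      rfl
    rw [h1, hmap n, Measure.map_fst_prod]
    simp
  have hindξ : iIndepFun ξ P :=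
    hind.comp (fun _ => (Prod.fst : (Fin d → ℤ) × ℝ → (Fin d → ℤ))) (fun _ => measurable_fst)
  -- the supermartingale-type bound
  set Φ : ℕ → Ω → ℝ≥0∞ :=
    (fun n ω => (∏ k ∈ Finset.range n, ρ (X k ω)) * H (X n ω)) with hΦd
  have hstep : ∀ n, ∫⁻ ω, Φ (n+1) ω ∂P ≤ ∫⁻ ω, Φ n ω ∂P := by
    intro n
    set V : Ω → (Fin n → (Fin d → ℤ)) := (fun ω k => ξ k ω) with hVd
    have hVm : Measurable V := measurable_pi_lambda _ (fun k => hξm k)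
    set pvext : (Fin n → (Fin d → ℤ)) → ℕ → (Fin d → ℤ) :=
      (fun v j => if h : j < n then v ⟨j, h⟩ else 0) with hvextd
    set ppos : (Fin n → (Fin d → ℤ)) → ℕ → (Fin d → ℤ) :=
      (fun v k => x + ∑ j ∈ Finset.range k, pvext v j) with hposd
    have hpos : ∀ ω, ∀ k, k ≤ n → ppos (V ω) k = X k ω := by
      intro ω k hk
      rw [hposd]
      simp only
      rw [hXtel k ω]
      congr 1
      apply Finset.sum_congr rfl
      intro j hj
      have hjn : j < n := lt_of_lt_of_le (Finset.mem_range.1 hj) hk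
      rw [hvextd]
      simp only [dif_pos hjn]
      rfl
    set Ψ : (Fin n → (Fin d → ℤ)) × (Fin d → ℤ) → ℝ≥0∞ :=
      (fun p => (∏ k ∈ Finset.range (n+1), ρ (ppos p.1 k)) * H (ppos p.1 n + p.2)) with hΨd
    set Ψ' : (Fin n → (Fin d → ℤ)) → ℝ≥0∞ :=
      (fun v => (∏ k ∈ Finset.range n, ρ (ppos v k)) * H (ppos v n)) with hΨ'd
    have hf2 : ∀ ω, Φ (n+1) ω = Ψ (V ω, ξ n ω) := by
      intro ω
      rw [hΦd, hΨd]
      simp only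
      congr 1
      · apply Finset.prod_congr rfl
        intro k hk
        have hk' : k ≤ n := Nat.lt_succ_iff.1 (Finset.mem_range.1 hk)
        rw [hpos ω k hk']
      · rw [hpos ω n le_rfl]
        have : X (n+1) ω = X n ω + ξ n ω := by rw [hξd]; simp
        rw [this]
    have hf3 : ∀ ω, Φ n ω = Ψ' (V ω) := by
      intro ω
      rw [hΦd, hΨ'd]
      simp only
      congr 1
      · apply Finset.prod_congr rfl
        intro k hk
        have hk' : k ≤ n := le_of_lt (Finset.mem_range.1 hk)
        rw [hpos ω k hk']
      · rw [hpos ω n le_rfl]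
    -- independence of V and ξ n
    have hIF : IndepFun V (ξ n) P := by
      have hdisj : Disjoint (Finset.range n) ({n} : Finset ℕ) := by
        simp [Finset.disjoint_singleton_right]
      have hbase := hindξ.indepFun_finset (Finset.range n) ({n} : Finset ℕ) hdisj hξm
      have hφ : Measurable (fun u : (↥(Finset.range n) → (Fin d → ℤ)) =>
          (fun k : Fin n => u ⟨k.val, Finset.mem_range.2 k.isLt⟩)) := measurable_of_countable _
      have hψ : Measurable (fun u : (↥({n} : Finset ℕ) → (Fin d → ℤ)) =>
          u ⟨n, Finset.mem_singleton_self n⟩) := measurable_of_countable _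
      exact hbase.comp hφ hψ
    have hpair : P.map (fun ω => (V ω, ξ n ω)) = (P.map V).prod (P.map (ξ n)) :=
      (indepFun_iff_map_prod_eq_prod_map_map hVm.aemeasurable (hξm n).aemeasurable).1 hIF
    haveI : IsProbabilityMeasure (P.map V) := Measure.isProbabilityMeasure_map hVm.aemeasurable
    calc ∫⁻ ω, Φ (n+1) ω ∂P = ∫⁻ ω, Ψ (V ω, ξ n ω) ∂P := lintegral_congr hf2
      _ = ∫⁻ p, Ψ p ∂(P.map (fun ω => (V ω, ξ n ω))) :=
          (lintegral_map (measurable_of_countable Ψ) (hVm.prodMk (hξm n))).symm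
      _ = ∫⁻ p, Ψ p ∂((P.map V).prod (srwStep d)) := by rw [hpair, hξlaw n]
      _ = ∫⁻ v, ∫⁻ e, Ψ (v, e) ∂(srwStep d) ∂(P.map V) :=
          lintegral_prod _ (measurable_of_countable Ψ).aemeasurable
      _ ≤ ∫⁻ v, Ψ' v ∂(P.map V) := by
          apply lintegral_mono
          intro v
          simp only [hΨd, hΨ'd]
          rw [lintegral_const_mul _ (measurable_of_countable _),
            srwStep_lintegral d H (ppos v n), Finset.prod_range_succ, mul_assoc]
          exact mul_le_mul_right (hkey (ppos v n)) _
      _ = ∫⁻ ω, Ψ' (V ω) ∂P := lintegral_map (measurable_of_countable Ψ') hVm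
      _ = ∫⁻ ω, Φ n ω ∂P := lintegral_congr (fun ω => (hf3 ω).symm)
  have hmain : ∀ n, ∫⁻ ω, Φ n ω ∂P ≤ ENNReal.ofReal (boxH d z a x) := by
    intro n
    induction n with
    | zero =>
      have : ∀ ω, Φ 0 ω = ENNReal.ofReal (boxH d z a x) := by
        intro ω
        rw [hΦd]
        simp [hX0 ω, hHd]
      rw [lintegral_congr this, lintegral_const, measure_univ, mul_one]
    | succ n ih => exact le_trans (hstep n) ih
  -- from Φ to the pure product
  set W : ℕ → Ω → ℝ≥0∞ := (fun n ω => ∏ k ∈ Finset.range n, ρ (X k ω)) with hWd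
  have hWm : ∀ n, Measurable (W n) := by
    intro n
    rw [hWd]
    apply Finset.measurable_prod
    intro k _
    exact (measurable_of_countable ρ).comp (hX k)
  have hWmono : ∀ ω, Monotone (fun n => W n ω) := by
    intro ω
    apply monotone_nat_of_le_succ
    intro n
    rw [hWd]
    simp only [Finset.prod_range_succ]
    exact le_mul_of_one_le_right' (hρ1 (X n ω))
  have hWle : ∀ n, ∫⁻ ω, W n ω ∂P ≤ ENNReal.ofReal (boxH d z a x) := by
    intro n
    refine le_trans (lintegral_mono (fun ω => ?_)) (hmain n)
    rw [hΦd, hWd]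
    simp only
    exact le_mul_of_one_le_right' (hH1 (X n ω))
  have hsup_le : ∫⁻ ω, (⨆ n, W n ω) ∂P ≤ 2 := by
    rw [lintegral_iSup hWm (fun i j hij ω => hWmono ω hij)]
    apply iSup_le
    intro n
    refine le_trans (hWle n) ?_
    calc ENNReal.ofReal (boxH d z a x) ≤ ENNReal.ofReal 2 :=
      ENNReal.ofReal_le_ofReal (boxH_le_two d z a ha0 x)
    _ = 2 := by norm_num
  refine le_trans (lintegral_mono (fun ω => ?_)) hsup_le
  -- pointwise: ofReal (exp (lam * R)) ≤ ⨆ n, W n ω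
  set r : ℝ≥0∞ := ENNReal.ofReal (Real.exp lam) with hrd
  have hr1 : 1 ≤ r := ENNReal.one_le_ofReal.2 (Real.one_le_exp hlam0.le)
  set T : Set (Fin d → ℤ) := (Set.range fun k => X k ω) ∩ B with hTd
  have hTfin : T.Finite := Set.Finite.subset (latticeBox_finite d z L) Set.inter_subset_right
  have hex : ∀ y ∈ T, ∃ k, X k ω = y := fun y hy => hy.1
  set kf : (Fin d → ℤ) → ℕ :=
    (fun y => if h : ∃ k, X k ω = y then Nat.find h else 0) with hkfd
  set n : ℕ := (hTfin.toFinset.sup kf) + 1 with hnd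
  have hcard : T.ncard ≤ ((Finset.range n).filter (fun j => X j ω ∈ B)).card := by
    rw [Set.ncard_eq_toFinset_card T hTfin]
    apply Finset.card_le_card_of_injOn kf
    · intro y hy
      have hyT : y ∈ T := hTfin.mem_toFinset.1 hy
      have hexy : ∃ k, X k ω = y := hex y hyT
      have hkfy : X (kf y) ω = y := by
        rw [hkfd]
        simp only [dif_pos hexy]
        exact Nat.find_spec hexy
      refine Finset.mem_filter.2 ⟨Finset.mem_range.2 ?_, ?_⟩
      · have : kf y ≤ hTfin.toFinset.sup kf := Finset.le_sup hy
        omega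
      · rw [hkfy]
        exact hyT.2
    · intro y1 hy1 y2 hy2 heq
      have hyT1 : y1 ∈ T := hTfin.mem_toFinset.1 (by simpa using hy1)
      have hyT2 : y2 ∈ T := hTfin.mem_toFinset.1 (by simpa using hy2)
      have h1 : X (kf y1) ω = y1 := by
        have hexy : ∃ k, X k ω = y1 := hex y1 hyT1
        rw [hkfd]; simp only [dif_pos hexy]; exact Nat.find_spec hexy
      have h2 : X (kf y2) ω = y2 := by
        have hexy : ∃ k, X k ω = y2 := hex y2 hyT2
        rw [hkfd]; simp only [dif_pos hexy]; exact Nat.find_spec hexy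
      rw [← h1, ← h2, heq]
  have hWn : W n ω = r ^ ((Finset.range n).filter (fun j => X j ω ∈ B)).card := by
    rw [hWd]
    simp only [hρd]
    exact prod_ite_mem_pow (Finset.range n) (fun k => X k ω) B r
  have hofreal : ENNReal.ofReal (Real.exp (lam * (T.ncard : ℝ))) = r ^ T.ncard := by
    rw [mul_comm, Real.exp_nat_mul, hrd, ENNReal.ofReal_pow (Real.exp_nonneg lam)]
  calc ENNReal.ofReal (Real.exp (lam * (T.ncard : ℝ))) = r ^ T.ncard := hofreal
    _ ≤ r ^ ((Finset.range n).filter (fun j => X j ω ∈ B)).card := pow_le_pow_right' hr1 hcard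
    _ = W n ω := hWn.symm
    _ ≤ ⨆ m, W m ω := le_iSup (fun m => W m ω) n
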